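/- Let 0 < ℓ < ω and let ℬ ⊆ 2^ℓ be a linearly independent set of vectors in the vector space (𝔽₂)^ℓ over 𝔽₂. If 𝒜 ⊆ 2^ℓ has |𝒜| ≥ 5 and 𝒜 + 𝒜 ⊆ ℬ + ℬ, then there is a unique x ∈ 2^ℓ such that 𝒜 + x ⊆ ℬ. -/

import Mathlib

open scoped Pointwise

private lemma htwo {ℓ : ℕ} : (2 : Fin ℓ → ZMod 2) = 0 := by
  funext i
  show (2 : ZMod 2) = 0
  decide

private lemma not_sum_eq_zero {ℓ : ℕ} {ℬ : Set (Fin ℓ → ZMod 2)}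
    (hB : LinearIndependent (ZMod 2) (fun b : ℬ => (b : Fin ℓ → ZMod 2)))
    (s : Finset (Fin ℓ → ZMod 2)) (hs : ∀ v ∈ s, v ∈ ℬ)
    (h0 : ∑ v ∈ s, v = 0) {b : Fin ℓ → ZMod 2} (hb : b ∈ s) : False := by
  classical
  let f : {x // x ∈ s} ↪ ℬ :=
    ⟨fun v => ⟨v.1, hs v.1 v.2⟩, by
      intro u v huv
      have h := congrArg Subtype.val huv; exact Subtype.ext h⟩
  have hsum : ∑ i ∈ s.attach.map f, (1 : ZMod 2) • (i : Fin ℓ → ZMod 2) = 0 := by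
    rw [Finset.sum_map]
    simp only [one_smul, f, Function.Embedding.coeFn_mk]
    exact (Finset.sum_attach s (fun v => v)).trans h0
  have h1 := linearIndependent_iff'.mp hB (s.attach.map f) (fun _ => (1 : ZMod 2))
      (by simpa using hsum) ⟨b, hs b hb⟩
      (Finset.mem_map.mpr ⟨⟨b, hb⟩, Finset.mem_attach _ _, rfl⟩)
  exact one_ne_zero h1

private lemma pair_unique {ℓ : ℕ} {ℬ : Set (Fin ℓ → ZMod 2)}
    (hB : LinearIndependent (ZMod 2) (fun b : ℬ => (b : Fin ℓ → ZMod 2)))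
    {b1 b2 b3 b4 : Fin ℓ → ZMod 2}
    (m1 : b1 ∈ ℬ) (m2 : b2 ∈ ℬ) (m3 : b3 ∈ ℬ) (m4 : b4 ∈ ℬ)
    (h12 : b1 ≠ b2) (hsum : b1 + b2 = b3 + b4) :
    (b1 = b3 ∧ b2 = b4) ∨ (b1 = b4 ∧ b2 = b3) := by
  by_cases e13 : b1 = b3
  · exact Or.inl ⟨e13, by linear_combination hsum - e13⟩
  by_cases e14 : b1 = b4
  · exact Or.inr ⟨e14, by linear_combination hsum - e14⟩
  by_cases e23 : b2 = b3
  · exact Or.inr ⟨by linear_combination hsum - e23, e23⟩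
  by_cases e24 : b2 = b4
  · exact Or.inl ⟨by linear_combination hsum - e24, e24⟩
  exfalso
  by_cases e34 : b3 = b4
  · exact h12 (by rw [e34] at hsum; linear_combination hsum + (b4 - b2) * htwo)
  refine not_sum_eq_zero hB {b1, b2, b3, b4} ?_ ?_ (Finset.mem_insert_self b1 _)
  · intro v hv
    simp only [Finset.mem_insert, Finset.mem_singleton] at hv
    rcases hv with rfl | rfl | rfl | rfl <;> assumption
  · rw [Finset.sum_insert (by simp [h12, e13, e14]),
      Finset.sum_insert (by simp [e23, e24]),
      Finset.sum_insert (by simp [e34]), Finset.sum_singleton]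
    linear_combination hsum + (b3 + b4) * htwo

private lemma pairrep {ℓ : ℕ} {ℬ 𝒜 : Set (Fin ℓ → ZMod 2)} (hsub : 𝒜 + 𝒜 ⊆ ℬ + ℬ)
    {a a' : Fin ℓ → ZMod 2} (ha : a ∈ 𝒜) (ha' : a' ∈ 𝒜) (hne : a ≠ a') :
    ∃ b b', b ∈ ℬ ∧ b' ∈ ℬ ∧ b ≠ b' ∧ a + a' = b + b' := by
  have hmem : a + a' ∈ ℬ + ℬ := hsub (Set.add_mem_add ha ha')
  rcases Set.mem_add.mp hmem with ⟨b, hb, b', hb', hsum⟩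
  refine ⟨b, b', hb, hb', ?_, hsum.symm⟩
  rintro rfl
  exact hne (by linear_combination -hsum + (b - a') * htwo)

private lemma triple {ℓ : ℕ} {ℬ 𝒜 : Set (Fin ℓ → ZMod 2)}
    (hB : LinearIndependent (ZMod 2) (fun b : ℬ => (b : Fin ℓ → ZMod 2)))
    (hsub : 𝒜 + 𝒜 ⊆ ℬ + ℬ)
    {u v w : Fin ℓ → ZMod 2} (hu : u ∈ 𝒜) (hv : v ∈ 𝒜) (hw : w ∈ 𝒜)
    (huv : u ≠ v) (huw : u ≠ w) (hvw : v ≠ w) :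
    ∃ z, u + z ∈ ℬ ∧ v + z ∈ ℬ ∧ w + z ∈ ℬ := by
  obtain ⟨b1, b2, m1, m2, d12, e12⟩ := pairrep hsub hu hv huv
  obtain ⟨b3, b4, m3, m4, d34, e34⟩ := pairrep hsub hu hw huw
  obtain ⟨b5, b6, m5, m6, d56, e56⟩ := pairrep hsub hv hw hvw
  have hshare : b1 = b3 ∨ b1 = b4 ∨ b2 = b3 ∨ b2 = b4 := by
    by_contra hcon
    push_neg at hcon
    obtain ⟨n13, n14, n23, n24⟩ := hcon
    have E : b5 + b6 = b1 + b2 + (b3 + b4) := by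
      linear_combination -e56 + e12 + e34 - u * htwo
    by_cases h51 : b5 = b1
    · by_cases h62 : b6 = b2
      · exact d34 (by linear_combination E - h51 - h62 + b3 * htwo)
      · have e : b2 + b6 = b3 + b4 := by linear_combination E - h51 + b2 * htwo
        rcases pair_unique hB m2 m6 m3 m4 (fun hh => h62 hh.symm) e with ⟨g, _⟩ | ⟨g, _⟩
        exacts [n23 g, n24 g]
    by_cases h52 : b5 = b2
    · by_cases h61 : b6 = b1
      · exact d34 (by linear_combination E - h52 - h61 + b3 * htwo)
      · have e : b1 + b6 = b3 + b4 := by linear_combination E - h52 + b1 * htwo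
        rcases pair_unique hB m1 m6 m3 m4 (fun hh => h61 hh.symm) e with ⟨g, _⟩ | ⟨g, _⟩
        exacts [n13 g, n14 g]
    by_cases h53 : b5 = b3
    · have e : b1 + b2 = b4 + b6 := by linear_combination -E + h53 - b4 * htwo
      rcases pair_unique hB m1 m2 m4 m6 d12 e with ⟨g, _⟩ | ⟨_, g⟩
      · exact n14 g
      · exact n24 g
    by_cases h54 : b5 = b4
    · have e : b1 + b2 = b3 + b6 := by linear_combination -E + h54 - b3 * htwo
      rcases pair_unique hB m1 m2 m3 m6 d12 e with ⟨g, _⟩ | ⟨_, g⟩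
      · exact n13 g
      · exact n23 g
    by_cases h61 : b6 = b1
    · have e : b2 + b5 = b3 + b4 := by linear_combination E - h61 + b2 * htwo
      rcases pair_unique hB m2 m5 m3 m4 (fun hh => h52 hh.symm) e with ⟨g, _⟩ | ⟨g, _⟩
      exacts [n23 g, n24 g]
    by_cases h62 : b6 = b2
    · have e : b1 + b5 = b3 + b4 := by linear_combination E - h62 + b1 * htwo
      rcases pair_unique hB m1 m5 m3 m4 (fun hh => h51 hh.symm) e with ⟨g, _⟩ | ⟨g, _⟩
      exacts [n13 g, n14 g]
    by_cases h63 : b6 = b3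
    · have e : b1 + b2 = b4 + b5 := by linear_combination -E + h63 - b4 * htwo
      rcases pair_unique hB m1 m2 m4 m5 d12 e with ⟨g, _⟩ | ⟨_, g⟩
      · exact n14 g
      · exact n24 g
    by_cases h64 : b6 = b4
    · have e : b1 + b2 = b3 + b5 := by linear_combination -E + h64 - b3 * htwo
      rcases pair_unique hB m1 m2 m3 m5 d12 e with ⟨g, _⟩ | ⟨_, g⟩
      · exact n13 g
      · exact n23 g
    by_cases h65 : b6 = b5
    · exact d56 h65.symm
    have n15 : b1 ≠ b5 := fun hh => h51 hh.symm
    have n16 : b1 ≠ b6 := fun hh => h61 hh.symm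
    have n25 : b2 ≠ b5 := fun hh => h52 hh.symm
    have n26 : b2 ≠ b6 := fun hh => h62 hh.symm
    have n35 : b3 ≠ b5 := fun hh => h53 hh.symm
    have n36 : b3 ≠ b6 := fun hh => h63 hh.symm
    have n45 : b4 ≠ b5 := fun hh => h54 hh.symm
    have n46 : b4 ≠ b6 := fun hh => h64 hh.symm
    have n56 : b5 ≠ b6 := fun hh => h65 hh.symm
    refine not_sum_eq_zero hB {b1, b2, b3, b4, b5, b6} ?_ ?_ (Finset.mem_insert_self b1 _)
    · intro x hx
      simp only [Finset.mem_insert, Finset.mem_singleton] at hx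
      rcases hx with rfl | rfl | rfl | rfl | rfl | rfl <;> assumption
    · rw [Finset.sum_insert (by simp [d12, n13, n14, n15, n16]),
        Finset.sum_insert (by simp [n23, n24, n25, n26]),
        Finset.sum_insert (by simp [d34, n35, n36]),
        Finset.sum_insert (by simp [n45, n46]),
        Finset.sum_insert (by simp [n56]), Finset.sum_singleton]
      linear_combination -E + (b5 + b6) * htwo
  rcases hshare with h | h | h | h
  · refine ⟨u + b1, ?_, ?_, ?_⟩
    · rw [show u + (u + b1) = b1 from by linear_combination u * htwo]; exact m1
    · rw [show v + (u + b1) = b2 from by linear_combination e12 + b1 * htwo]; exact m2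
    · rw [show w + (u + b1) = b4 from by linear_combination e34 + h + b3 * htwo]; exact m4
  · refine ⟨u + b1, ?_, ?_, ?_⟩
    · rw [show u + (u + b1) = b1 from by linear_combination u * htwo]; exact m1
    · rw [show v + (u + b1) = b2 from by linear_combination e12 + b1 * htwo]; exact m2
    · rw [show w + (u + b1) = b3 from by linear_combination e34 + h + b4 * htwo]; exact m3
  · refine ⟨u + b2, ?_, ?_, ?_⟩
    · rw [show u + (u + b2) = b2 from by linear_combination u * htwo]; exact m2
    · rw [show v + (u + b2) = b1 from by linear_combination e12 + b2 * htwo]; exact m1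
    · rw [show w + (u + b2) = b4 from by linear_combination e34 + h + b3 * htwo]; exact m4
  · refine ⟨u + b2, ?_, ?_, ?_⟩
    · rw [show u + (u + b2) = b2 from by linear_combination u * htwo]; exact m2
    · rw [show v + (u + b2) = b1 from by linear_combination e12 + b2 * htwo]; exact m1
    · rw [show w + (u + b2) = b3 from by linear_combination e34 + h + b4 * htwo]; exact m3

private lemma key {ℓ : ℕ} {ℬ 𝒜 : Set (Fin ℓ → ZMod 2)}
    (hB : LinearIndependent (ZMod 2) (fun b : ℬ => (b : Fin ℓ → ZMod 2)))
    (hsub : 𝒜 + 𝒜 ⊆ ℬ + ℬ)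
    {a1 a2 p q u u' w : Fin ℓ → ZMod 2}
    (ha1 : a1 ∈ 𝒜) (ha2 : a2 ∈ 𝒜) (hu : u ∈ 𝒜) (hu' : u' ∈ 𝒜) (hw : w ∈ 𝒜)
    (hp : p ∈ ℬ) (hq : q ∈ ℬ) (hrep : a1 + a2 = p + q) (h12 : a1 ≠ a2)
    (huu' : u ≠ u') (huw : u ≠ w) (hu'w : u' ≠ w)
    (hu1 : u ≠ a1) (hu2 : u ≠ a2) (hu'1 : u' ≠ a1) (hu'2 : u' ≠ a2)
    (hw1 : w ≠ a1) (hw2 : w ≠ a2)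
    (hux : u + (a1 + p) ∈ ℬ) (hu'x : u' + (a1 + p) ∈ ℬ)
    (hwx : w + (a1 + p) ∉ ℬ) : False := by
  have hx1 : a1 + (a1 + p) = p := by linear_combination a1 * htwo
  have hx2 : a2 + (a1 + p) = q := by linear_combination hrep + p * htwo
  obtain ⟨z, huz, hu'z, hwz⟩ := triple hB hsub hu hu' hw huu' huw hu'w
  have eq2 : (u + (a1 + p)) + (u' + (a1 + p)) = (u + z) + (u' + z) := by
    linear_combination (a1 + p - z) * htwo
  rcases pair_unique hB hux hu'x huz hu'z
      (fun h => huu' (by linear_combination h)) eq2 with ⟨e1, _⟩ | ⟨e1, e2⟩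
  · exact hwx (by rw [show w + (a1 + p) = w + z from by linear_combination e1]; exact hwz)
  obtain ⟨z1, huz1, ha1z1, hwz1⟩ := triple hB hsub hu ha1 hw hu1 huw hw1.symm
  have eq3 : (u + (a1 + p)) + p = (u + z1) + (a1 + z1) := by
    linear_combination -hx1 + ((a1 + p) - z1) * htwo
  rcases pair_unique hB hux hp huz1 ha1z1
      (fun h => hu1 (by linear_combination h - hx1)) eq3 with ⟨e3, _⟩ | ⟨e3, _⟩
  · exact hwx (by rw [show w + (a1 + p) = w + z1 from by linear_combination e3]; exact hwz1)
  have hz1 : z1 = u + a1 + (a1 + p) := by linear_combination -e3 - a1 * htwo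
  obtain ⟨z2, huz2, ha2z2, hwz2⟩ := triple hB hsub hu ha2 hw hu2 huw hw2.symm
  have eq4 : (u + (a1 + p)) + q = (u + z2) + (a2 + z2) := by
    linear_combination -hx2 + ((a1 + p) - z2) * htwo
  rcases pair_unique hB hux hq huz2 ha2z2
      (fun h => hu2 (by linear_combination h - hx2)) eq4 with ⟨e4, _⟩ | ⟨e4, _⟩
  · exact hwx (by rw [show w + (a1 + p) = w + z2 from by linear_combination e4]; exact hwz2)
  have hz2 : z2 = u + a2 + (a1 + p) := by linear_combination -e4 - a2 * htwo
  have eq5 : (w + z1) + (w + z2) = p + q := by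
    linear_combination hz1 + hz2 + hrep + (w + u + (a1 + p)) * htwo
  have hne5 : w + z1 ≠ w + z2 := fun h => h12 (by linear_combination h - hz1 + hz2)
  rcases pair_unique hB hwz1 hwz2 hp hq hne5 eq5 with ⟨e5, _⟩ | ⟨_, e5⟩
  · exact huw (by linear_combination -e5 - hz1 + hx1 + (z1 - a1 - (a1 + p)) * htwo)
  · have eq6 : (u + z) + (w + z) = p + q := by
      linear_combination e5 + hz2 - hx1 + hrep + (u + (a1 + p) + z - z2) * htwo
    rcases pair_unique hB huz hwz hp hq
        (fun h => huw (by linear_combination h)) eq6 with ⟨f1, _⟩ | ⟨f1, _⟩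
    · exact hu'1 (by linear_combination f1 + e2 - hx1)
    · exact hu'2 (by linear_combination f1 + e2 - hx2)

/-- If `ℬ ⊆ (𝔽₂)^ℓ` is linearly independent, `|𝒜| ≥ 5` and `𝒜 + 𝒜 ⊆ ℬ + ℬ`,
then there is a unique `x` with `𝒜 + x ⊆ ℬ`. -/
theorem stmt_3 (ℓ : ℕ) (hℓ : 0 < ℓ) (ℬ 𝒜 : Set (Fin ℓ → ZMod 2))
    (hB : LinearIndependent (ZMod 2) (fun b : ℬ => (b : Fin ℓ → ZMod 2)))
    (hA : 5 ≤ 𝒜.ncard) (hsub : 𝒜 + 𝒜 ⊆ ℬ + ℬ) :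
    ∃! x : Fin ℓ → ZMod 2, ∀ a ∈ 𝒜, a + x ∈ ℬ := by
  classical
  have hfin : 𝒜.Finite := Set.toFinite 𝒜
  obtain ⟨a1, ha1⟩ := Set.nonempty_of_ncard_ne_zero (s := 𝒜) (by omega)
  have hn1 : 4 ≤ (𝒜 \ {a1}).ncard := by
    have := Set.ncard_diff_singleton_of_mem ha1
    omega
  obtain ⟨a2, ha2'⟩ := Set.nonempty_of_ncard_ne_zero (s := 𝒜 \ {a1}) (by omega)
  have hn2 : 3 ≤ ((𝒜 \ {a1}) \ {a2}).ncard := by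
    have := Set.ncard_diff_singleton_of_mem ha2'
    omega
  obtain ⟨a3, ha3'⟩ := Set.nonempty_of_ncard_ne_zero (s := (𝒜 \ {a1}) \ {a2}) (by omega)
  have hn3 : 2 ≤ (((𝒜 \ {a1}) \ {a2}) \ {a3}).ncard := by
    have := Set.ncard_diff_singleton_of_mem ha3'
    omega
  obtain ⟨a4, ha4'⟩ := Set.nonempty_of_ncard_ne_zero (s := ((𝒜 \ {a1}) \ {a2}) \ {a3})
    (by omega)
  have hn4 : 1 ≤ ((((𝒜 \ {a1}) \ {a2}) \ {a3}) \ {a4}).ncard := by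
    have := Set.ncard_diff_singleton_of_mem ha4'
    omega
  obtain ⟨a5, ha5'⟩ := Set.nonempty_of_ncard_ne_zero
    (s := (((𝒜 \ {a1}) \ {a2}) \ {a3}) \ {a4}) (by omega)
  simp only [Set.mem_diff, Set.mem_singleton_iff] at ha2' ha3' ha4' ha5'
  obtain ⟨ha2, hne21⟩ := ha2'
  obtain ⟨⟨ha3, hne31⟩, hne32⟩ := ha3'
  obtain ⟨⟨⟨ha4, hne41⟩, hne42⟩, hne43⟩ := ha4'
  obtain ⟨⟨⟨⟨ha5, hne51⟩, hne52⟩, hne53⟩, hne54⟩ := ha5'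
  have h12 : a1 ≠ a2 := fun h => hne21 h.symm
  obtain ⟨p, q, hp, hq, hpq, hrep⟩ := pairrep hsub ha1 ha2 h12
  have hx2 : a2 + (a1 + p) = q := by linear_combination hrep + p * htwo
  -- coverage
  have side : ∀ a ∈ 𝒜, a ≠ a1 → a ≠ a2 → a + (a1 + p) ∈ ℬ ∨ a + (a1 + q) ∈ ℬ := by
    intro a ha hne1 hne2
    obtain ⟨z, h1z, h2z, haz⟩ := triple hB hsub ha1 ha2 ha h12 hne1.symm hne2.symm
    have eqz : (a1 + z) + (a2 + z) = p + q := by linear_combination hrep + z * htwo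
    rcases pair_unique hB h1z h2z hp hq
        (fun h => h12 (by linear_combination h)) eqz with ⟨e, _⟩ | ⟨e, _⟩
    · left
      rw [show a + (a1 + p) = a + z from by linear_combination -e + a1 * htwo]
      exact haz
    · right
      rw [show a + (a1 + q) = a + z from by linear_combination -e + a1 * htwo]
      exact haz
  have notboth : ∀ a ∈ 𝒜, a ≠ a1 → a ≠ a2 →
      a + (a1 + p) ∈ ℬ → a + (a1 + q) ∈ ℬ → False := by
    intro a ha hne1 hne2 hax hay
    have eqz : (a + (a1 + p)) + (a + (a1 + q)) = p + q := by
      linear_combination (a + a1) * htwo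
    rcases pair_unique hB hax hay hp hq
        (fun h => hpq (by linear_combination h)) eqz with ⟨e, _⟩ | ⟨e, _⟩
    · exact hne1 (by linear_combination e - a1 * htwo)
    · exact hne2 (by linear_combination e - hx2)
  -- uniqueness finisher
  have final : ∀ x0 : Fin ℓ → ZMod 2, (∀ a ∈ 𝒜, a + x0 ∈ ℬ) →
      ∃! x : Fin ℓ → ZMod 2, ∀ a ∈ 𝒜, a + x ∈ ℬ := by
    intro x0 h0
    refine ⟨x0, h0, ?_⟩
    intro x' h'
    rcases pair_unique hB (h' a3 ha3) (h' a4 ha4) (h0 a3 ha3) (h0 a4 ha4)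
        (fun h => hne43 (by linear_combination -h))
        (by linear_combination (x' - x0) * htwo) with ⟨e, _⟩ | ⟨e1, _⟩
    · linear_combination e
    · rcases pair_unique hB (h' a3 ha3) (h' a5 ha5) (h0 a3 ha3) (h0 a5 ha5)
          (fun h => hne53 (by linear_combination -h))
          (by linear_combination (x' - x0) * htwo) with ⟨e, _⟩ | ⟨f1, _⟩
      · linear_combination e
      · exact absurd (show a4 = a5 by linear_combination f1 - e1)
          (fun h => hne54 h.symm)
  -- building a full solution
  have buildall : ∀ p' q' : Fin ℓ → ZMod 2, p' ∈ ℬ → q' ∈ ℬ → a1 + a2 = p' + q' →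
      a3 + (a1 + p') ∈ ℬ → a4 + (a1 + p') ∈ ℬ → a5 + (a1 + p') ∈ ℬ →
      ∀ a ∈ 𝒜, a + (a1 + p') ∈ ℬ := by
    intro p' q' hp' hq' hrep' h3 h4 h5 a ha
    by_cases e1 : a = a1
    · subst e1
      rw [show a + (a + p') = p' from by linear_combination a * htwo]
      exact hp'
    by_cases e2 : a = a2
    · subst e2
      rw [show a + (a1 + p') = q' from by linear_combination hrep' + p' * htwo]
      exact hq'
    by_cases e3 : a = a3
    · subst e3; exact h3
    by_cases e4 : a = a4
    · subst e4; exact h4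
    by_cases e5 : a = a5
    · subst e5; exact h5
    by_contra hax
    exact key hB hsub ha1 ha2 ha3 ha4 ha hp' hq' hrep' h12
      (fun h => hne43 h.symm) (fun h => e3 h.symm) (fun h => e4 h.symm)
      hne31 hne32 hne41 hne42 e1 e2 h3 h4 hax
  have hrepswap : a1 + a2 = q + p := by linear_combination hrep
  by_cases h3 : a3 + (a1 + p) ∈ ℬ <;> by_cases h4 : a4 + (a1 + p) ∈ ℬ <;>
    by_cases h5 : a5 + (a1 + p) ∈ ℬ
  · exact final _ (buildall p q hp hq hrep h3 h4 h5)
  · exact (key hB hsub ha1 ha2 ha3 ha4 ha5 hp hq hrep h12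
      (fun h => hne43 h.symm) (fun h => hne53 h.symm) (fun h => hne54 h.symm)
      hne31 hne32 hne41 hne42 hne51 hne52 h3 h4 h5).elim
  · exact (key hB hsub ha1 ha2 ha3 ha5 ha4 hp hq hrep h12
      (fun h => hne53 h.symm) (fun h => hne43 h.symm) hne54
      hne31 hne32 hne51 hne52 hne41 hne42 h3 h5 h4).elim
  · have h4y : a4 + (a1 + q) ∈ ℬ := (side a4 ha4 hne41 hne42).resolve_left h4
    have h5y : a5 + (a1 + q) ∈ ℬ := (side a5 ha5 hne51 hne52).resolve_left h5
    have h3y : a3 + (a1 + q) ∉ ℬ := fun h => notboth a3 ha3 hne31 hne32 h3 h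
    exact (key hB hsub ha1 ha2 ha4 ha5 ha3 hq hp hrepswap h12
      (fun h => hne54 h.symm) hne43 hne53
      hne41 hne42 hne51 hne52 hne31 hne32 h4y h5y h3y).elim
  · exact (key hB hsub ha1 ha2 ha4 ha5 ha3 hp hq hrep h12
      (fun h => hne54 h.symm) hne43 hne53
      hne41 hne42 hne51 hne52 hne31 hne32 h4 h5 h3).elim
  · have h3y : a3 + (a1 + q) ∈ ℬ := (side a3 ha3 hne31 hne32).resolve_left h3
    have h5y : a5 + (a1 + q) ∈ ℬ := (side a5 ha5 hne51 hne52).resolve_left h5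
    have h4y : a4 + (a1 + q) ∉ ℬ := fun h => notboth a4 ha4 hne41 hne42 h4 h
    exact (key hB hsub ha1 ha2 ha3 ha5 ha4 hq hp hrepswap h12
      (fun h => hne53 h.symm) (fun h => hne43 h.symm) hne54
      hne31 hne32 hne51 hne52 hne41 hne42 h3y h5y h4y).elim
  · have h3y : a3 + (a1 + q) ∈ ℬ := (side a3 ha3 hne31 hne32).resolve_left h3
    have h4y : a4 + (a1 + q) ∈ ℬ := (side a4 ha4 hne41 hne42).resolve_left h4
    have h5y : a5 + (a1 + q) ∉ ℬ := fun h => notboth a5 ha5 hne51 hne52 h5 h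
    exact (key hB hsub ha1 ha2 ha3 ha4 ha5 hq hp hrepswap h12
      (fun h => hne43 h.symm) (fun h => hne53 h.symm) (fun h => hne54 h.symm)
      hne31 hne32 hne41 hne42 hne51 hne52 h3y h4y h5y).elim
  · have h3y : a3 + (a1 + q) ∈ ℬ := (side a3 ha3 hne31 hne32).resolve_left h3
    have h4y : a4 + (a1 + q) ∈ ℬ := (side a4 ha4 hne41 hne42).resolve_left h4
    have h5y : a5 + (a1 + q) ∈ ℬ := (side a5 ha5 hne51 hne52).resolve_left h5
    exact final _ (buildall q p hq hp hrepswap h3y h4y h5y)
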